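/- Let (z_j)_{j∈ℕ} be a sequence in the unit ball 𝔹_d ⊂ ℂ^d that is weakly separated, i.e., inf_{j≠k} ρ(z_j,z_k) > 0. Then (z_j) is uniformly separated, i.e., inf_k ∏_{j≠k} ρ(z_j,z_k) > 0, if and only if sup_k ∑_{j≠k} (1 − ρ(z_j,z_k)²) < ∞. Moreover, the implication that uniform separation implies sup_k ∑_{j≠k} (1 − ρ(z_j,z_k)²) < ∞ holds for every sequence in 𝔹_d, without any weak separation assumption. -/

import Mathlib

open MeasureTheory ProbabilityTheory ENNReal

noncomputable section

/-- We endow `EuclideanSpace ℂ (Fin d)` with its Borel `σ`-algebra. -/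
instance (d : ℕ) : MeasurableSpace (EuclideanSpace ℂ (Fin d)) := borel _

instance (d : ℕ) : BorelSpace (EuclideanSpace ℂ (Fin d)) := ⟨rfl⟩

/-- The pseudo-hyperbolic distance `ρ(z,w) = |φ_z(w)|` on the unit ball `𝔹_d ⊂ ℂ^d`, defined
via the identity `1 - ρ(z,w)² = (1-|z|²)(1-|w|²)/|1-⟨w,z⟩|²`. -/
def ballRho {d : ℕ} (z w : EuclideanSpace ℂ (Fin d)) : ℝ :=
  Real.sqrt (1 - (1 - ‖z‖ ^ 2) * (1 - ‖w‖ ^ 2) / ‖(1 - @inner ℂ _ _ w z)‖ ^ 2)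

/-- A random sequence `λ_j = ρ_j ξ_j` in the unit ball `𝔹_d ⊂ ℂ^d`: deterministic radii
`ρ_j ∈ [0,1)` and an independent sequence `(ξ_j)` of random variables uniformly distributed
on the unit sphere.  Uniformity is expressed by invariance of the distribution of each `ξ_j`
under every unitary transformation, which uniquely characterizes the normalized surface
measure among probability distributions supported on the sphere. -/
structure RandomBallSeq (d : ℕ) (Ω : Type*) [MeasurableSpace Ω]
    (P : MeasureTheory.Measure Ω) where
  rad : ℕ → ℝ
  rad_mem : ∀ j, rad j ∈ Set.Ico (0 : ℝ) 1
  ξ : ℕ → Ω → EuclideanSpace ℂ (Fin d)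
  ξ_meas : ∀ j, Measurable (ξ j)
  ξ_sphere : ∀ j ω, ‖ξ j ω‖ = 1
  ξ_indep : iIndepFun ξ P
  ξ_unif : ∀ (j : ℕ) (U : EuclideanSpace ℂ (Fin d) ≃ₗᵢ[ℂ] EuclideanSpace ℂ (Fin d)),
      MeasureTheory.Measure.map (fun ω => U (ξ j ω)) P = MeasureTheory.Measure.map (ξ j) P

namespace RandomBallSeq

variable {d : ℕ} {Ω : Type*} [MeasurableSpace Ω] {P : MeasureTheory.Measure Ω}

/-- The random point `λ_j(ω) = ρ_j ξ_j(ω) ∈ 𝔹_d`. -/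
def pt (Λ : RandomBallSeq d Ω P) (j : ℕ) (ω : Ω) : EuclideanSpace ℂ (Fin d) :=
  Λ.rad j • Λ.ξ j ω

/-- `N_m = #{j : m (ln 2)/2 ≤ β(0, λ_j) < (m+1)(ln 2)/2}` where
`β(0,z) = (1/2) log((1+|z|)/(1-|z|))` is the Bergman distance from the origin; since
`|λ_j| = ρ_j`, this is deterministic. -/
def N (Λ : RandomBallSeq d Ω P) (m : ℕ) : ℝ≥0∞ :=
  ({j : ℕ |
      (m : ℝ) * Real.log 2 / 2 ≤ (1 / 2) * Real.log ((1 + Λ.rad j) / (1 - Λ.rad j)) ∧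
      (1 / 2) * Real.log ((1 + Λ.rad j) / (1 - Λ.rad j)) < ((m : ℝ) + 1) * Real.log 2 / 2
    }).encard

/-- The realization `Λ(ω)` is uniformly separated: `inf_k ∏_{j ≠ k} ρ(λ_j, λ_k) > 0`.
Since the factors lie in `[0,1)`, the infinite product is the infimum of its finite partial
products, so this is expressed via finite subproducts. -/
def UniformlySeparated (Λ : RandomBallSeq d Ω P) (ω : Ω) : Prop :=
  ∃ c > (0 : ℝ), ∀ k : ℕ, ∀ F : Finset ℕ, k ∉ F →
    c ≤ ∏ j ∈ F, ballRho (Λ.pt j ω) (Λ.pt k ω)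

end RandomBallSeq

lemma ballRho_nonneg {d : ℕ} (z w : EuclideanSpace ℂ (Fin d)) : 0 ≤ ballRho z w :=
  Real.sqrt_nonneg _

lemma ballRho_le_one {d : ℕ} {z w : EuclideanSpace ℂ (Fin d)}
    (hz : ‖z‖ < 1) (hw : ‖w‖ < 1) : ballRho z w ≤ 1 := by
  have hX : 0 ≤ (1 - ‖z‖ ^ 2) * (1 - ‖w‖ ^ 2) / ‖(1 - @inner ℂ _ _ w z)‖ ^ 2 := by
    apply div_nonneg
    · apply mul_nonneg <;> nlinarith [norm_nonneg z, norm_nonneg w]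
    · positivity
  calc ballRho z w ≤ Real.sqrt 1 := Real.sqrt_le_sqrt (by linarith)
    _ = 1 := Real.sqrt_one

lemma one_sub_sq_le_neg_log {ρ : ℝ} (h0 : 0 < ρ) (h1 : ρ ≤ 1) :
    1 - ρ ^ 2 ≤ -2 * Real.log ρ := by
  have hlog := Real.log_le_sub_one_of_pos h0
  nlinarith

lemma neg_log_le_div {c ρ : ℝ} (hc : 0 < c) (h1 : c ≤ ρ) (h2 : ρ ≤ 1) :
    -Real.log ρ ≤ (1 - ρ ^ 2) / c := by
  have hρ : 0 < ρ := hc.trans_le h1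
  have hlog : Real.log ρ⁻¹ ≤ ρ⁻¹ - 1 := Real.log_le_sub_one_of_pos (by positivity)
  rw [Real.log_inv] at hlog
  have h5 : -Real.log ρ * ρ ≤ 1 - ρ := by
    have := mul_le_mul_of_nonneg_right hlog hρ.le
    rw [sub_mul, inv_mul_cancel₀ hρ.ne', one_mul] at this
    linarith [this]
  have hLnp : Real.log ρ ≤ 0 := Real.log_nonpos hρ.le h2
  rw [le_div_iff₀ hc]
  nlinarith [mul_nonneg (neg_nonneg.mpr hLnp) (sub_nonneg.mpr h1),
    mul_nonneg hρ.le (sub_nonneg.mpr h2)]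

/-- The universal forward direction: uniform separation implies the sum bound. -/
lemma uniform_sep_implies_sum {d : ℕ} (w : ℕ → EuclideanSpace ℂ (Fin d))
    (hw : ∀ j, ‖w j‖ < 1)
    (h : ∃ c > (0 : ℝ), ∀ k : ℕ, ∀ F : Finset ℕ, k ∉ F →
        c ≤ ∏ j ∈ F, ballRho (w j) (w k)) :
    (⨆ k : ℕ, ∑' j : ℕ,
        if j = k then 0 else ENNReal.ofReal (1 - ballRho (w j) (w k) ^ 2)) < ⊤ := by
  obtain ⟨c, hc, hP⟩ := h
  have hρpos : ∀ j k : ℕ, j ≠ k → 0 < ballRho (w j) (w k) := by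
    intro j k hjk
    have h1 := hP k {j} (by simp [Ne.symm hjk])
    simp only [Finset.prod_singleton] at h1
    linarith
  refine lt_of_le_of_lt (iSup_le fun k => ?_)
    (show ENNReal.ofReal (-2 * Real.log c) < ⊤ from ENNReal.ofReal_lt_top)
  rw [ENNReal.tsum_eq_iSup_sum]
  refine iSup_le fun F => ?_
  have hsplit : ∑ j ∈ F, (if j = k then 0
        else ENNReal.ofReal (1 - ballRho (w j) (w k) ^ 2))
      = ∑ j ∈ F.erase k, ENNReal.ofReal (1 - ballRho (w j) (w k) ^ 2) := by
    rw [← Finset.sum_erase (f := fun j => if j = k then 0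
        else ENNReal.ofReal (1 - ballRho (w j) (w k) ^ 2)) F (if_pos rfl)]
    exact Finset.sum_congr rfl fun j hj => if_neg (Finset.ne_of_mem_erase hj)
  rw [hsplit]
  set G := F.erase k with hG
  have hkG : k ∉ G := Finset.notMem_erase _ _
  have hne : ∀ j ∈ G, j ≠ k := fun j hj => Finset.ne_of_mem_erase hj
  have hnn : ∀ j ∈ G, 0 ≤ 1 - ballRho (w j) (w k) ^ 2 := by
    intro j hj
    have h1 := ballRho_le_one (hw j) (hw k)
    have h0 := ballRho_nonneg (w j) (w k)
    nlinarith
  rw [← ENNReal.ofReal_sum_of_nonneg hnn]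
  apply ENNReal.ofReal_le_ofReal
  have hterm : ∀ j ∈ G, 1 - ballRho (w j) (w k) ^ 2
      ≤ -2 * Real.log (ballRho (w j) (w k)) := fun j hj =>
    one_sub_sq_le_neg_log (hρpos j k (hne j hj)) (ballRho_le_one (hw j) (hw k))
  calc ∑ j ∈ G, (1 - ballRho (w j) (w k) ^ 2)
      ≤ ∑ j ∈ G, -2 * Real.log (ballRho (w j) (w k)) := Finset.sum_le_sum hterm
    _ = -2 * Real.log (∏ j ∈ G, ballRho (w j) (w k)) := by
        rw [Real.log_prod (fun j hj => (hρpos j k (hne j hj)).ne'), Finset.mul_sum]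
    _ ≤ -2 * Real.log c := by
        have hlog : Real.log c ≤ Real.log (∏ j ∈ G, ballRho (w j) (w k)) :=
          Real.log_le_log hc (hP k G hkG)
        linarith

/-- A weakly separated sequence in `𝔹_d` is uniformly separated if and only if
`sup_k ∑_{j ≠ k} (1 - ρ(z_j,z_k)²) < ∞`; moreover, the forward implication (uniform separation
implies finiteness of the supremum) holds for every sequence in `𝔹_d`, with no weak separation
assumption. -/
theorem uniform_separation_iff_sum_ball (d : ℕ)
    (z : ℕ → EuclideanSpace ℂ (Fin d)) (hz : ∀ j, ‖z j‖ < 1)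
    (hweak : ∃ c > (0 : ℝ), ∀ j k : ℕ, j ≠ k → c ≤ ballRho (z j) (z k)) :
    ((∃ c > (0 : ℝ), ∀ k : ℕ, ∀ F : Finset ℕ, k ∉ F →
        c ≤ ∏ j ∈ F, ballRho (z j) (z k)) ↔
      (⨆ k : ℕ, ∑' j : ℕ,
        if j = k then 0 else ENNReal.ofReal (1 - ballRho (z j) (z k) ^ 2)) < ⊤) ∧
    (∀ w : ℕ → EuclideanSpace ℂ (Fin d), (∀ j, ‖w j‖ < 1) →
      (∃ c > (0 : ℝ), ∀ k : ℕ, ∀ F : Finset ℕ, k ∉ F →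
        c ≤ ∏ j ∈ F, ballRho (w j) (w k)) →
      (⨆ k : ℕ, ∑' j : ℕ,
        if j = k then 0 else ENNReal.ofReal (1 - ballRho (w j) (w k) ^ 2)) < ⊤) := by
  obtain ⟨c₀, hc₀, hweak⟩ := hweak
  refine ⟨⟨fun h => uniform_sep_implies_sum z hz h, fun hsup => ?_⟩,
    fun w hw h => uniform_sep_implies_sum w hw h⟩
  set S := ⨆ k : ℕ, ∑' j : ℕ,
      if j = k then 0 else ENNReal.ofReal (1 - ballRho (z j) (z k) ^ 2) with hSdef
  have hS : S ≠ ⊤ := hsup.ne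
  set M := S.toReal with hM
  refine ⟨Real.exp (-(M / c₀)), Real.exp_pos _, fun k F hkF => ?_⟩
  have hne : ∀ j ∈ F, j ≠ k := fun j hj => by rintro rfl; exact hkF hj
  have hρ : ∀ j ∈ F, c₀ ≤ ballRho (z j) (z k) := fun j hj => hweak j k (hne j hj)
  have hρpos : ∀ j ∈ F, 0 < ballRho (z j) (z k) := fun j hj => hc₀.trans_le (hρ j hj)
  have hρle1 : ∀ j ∈ F, ballRho (z j) (z k) ≤ 1 := fun j hj =>
    ballRho_le_one (hz j) (hz k)
  -- finite sum of (1 - ρ²) is at most M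
  have hsumM : ∑ j ∈ F, (1 - ballRho (z j) (z k) ^ 2) ≤ M := by
    have hnn : ∀ j ∈ F, 0 ≤ 1 - ballRho (z j) (z k) ^ 2 := by
      intro j hj
      have h1 := hρle1 j hj
      have h0 := ballRho_nonneg (z j) (z k)
      nlinarith
    have hle : ENNReal.ofReal (∑ j ∈ F, (1 - ballRho (z j) (z k) ^ 2)) ≤ S := by
      rw [ENNReal.ofReal_sum_of_nonneg hnn]
      have h1 : ∑ j ∈ F, ENNReal.ofReal (1 - ballRho (z j) (z k) ^ 2)
          = ∑ j ∈ F, (if j = k then 0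
              else ENNReal.ofReal (1 - ballRho (z j) (z k) ^ 2)) :=
        Finset.sum_congr rfl fun j hj => (if_neg (hne j hj)).symm
      rw [h1]
      exact le_trans (ENNReal.sum_le_tsum F)
        (le_iSup (fun k : ℕ => ∑' j : ℕ, if j = k then 0
          else ENNReal.ofReal (1 - ballRho (z j) (z k) ^ 2)) k)
    exact (ENNReal.ofReal_le_iff_le_toReal hS).mp hle
  have hlogsum : -(M / c₀) ≤ ∑ j ∈ F, Real.log (ballRho (z j) (z k)) := by
    have h1 : ∑ j ∈ F, -Real.log (ballRho (z j) (z k))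
        ≤ ∑ j ∈ F, (1 - ballRho (z j) (z k) ^ 2) / c₀ :=
      Finset.sum_le_sum fun j hj => neg_log_le_div hc₀ (hρ j hj) (hρle1 j hj)
    rw [← Finset.sum_div] at h1
    have h2 : ∑ j ∈ F, (1 - ballRho (z j) (z k) ^ 2) ≤ M := hsumM
    have h3 : (∑ j ∈ F, (1 - ballRho (z j) (z k) ^ 2)) / c₀ ≤ M / c₀ :=
      (div_le_div_iff_of_pos_right hc₀).mpr h2
    have h4 : ∑ j ∈ F, -Real.log (ballRho (z j) (z k))
        = -∑ j ∈ F, Real.log (ballRho (z j) (z k)) := by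
      rw [Finset.sum_neg_distrib]
    linarith
  calc Real.exp (-(M / c₀)) ≤ Real.exp (∑ j ∈ F, Real.log (ballRho (z j) (z k))) :=
        Real.exp_le_exp.mpr hlogsum
    _ = ∏ j ∈ F, Real.exp (Real.log (ballRho (z j) (z k))) := Real.exp_sum _ _
    _ = ∏ j ∈ F, ballRho (z j) (z k) :=
        Finset.prod_congr rfl fun j hj => Real.exp_log (hρpos j hj)
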